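/- Let S be the numerical semigroup generated by positive integers n_1,...,n_k with gcd(n_1,...,n_k)=1, let T(S)={g_1,...,g_t} be its set of pseudo-Frobenius numbers, and let f be an odd integer with f ≥ 3g(S)+1. Let T be the numerical semigroup generated by 2n_1,...,2n_k, f−2g_1,...,f−2g_t. Then S is the half of T: for every natural number x, x ∈ S if and only if 2x ∈ T. -/

import Mathlib

/-- Membership of an integer in an additive submonoid of `ℕ`, viewed inside `ℤ`
via the inclusion `ℕ ⊆ ℤ`. -/
def AddSubmonoid.zmem (S : AddSubmonoid ℕ) (x : ℤ) : Prop :=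
  ∃ n : ℕ, n ∈ S ∧ (n : ℤ) = x

/-- The Frobenius number `g(S) = max {x ∈ ℤ : x ∉ S}` of a numerical semigroup. -/
noncomputable def frobeniusNumber (S : AddSubmonoid ℕ) : ℤ :=
  sSup {x : ℤ | ¬ S.zmem x}

/-- The set of pseudo-Frobenius numbers
`T(S) = {x ∈ ℤ \ S : x + s ∈ S for all s ∈ S, s ≠ 0}`. -/
def pseudoFrobeniusSet (S : AddSubmonoid ℕ) : Set ℤ :=
  {x : ℤ | ¬ S.zmem x ∧ ∀ s ∈ S, s ≠ 0 → S.zmem (x + s)}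


lemma exists_bound (k : ℕ) (n : Fin k → ℕ) (hgcd : Finset.univ.gcd n = 1) :
    ∃ N : ℕ, ∀ m, N ≤ m → m ∈ AddSubmonoid.closure (Set.range n) := by
  set Sm := AddSubmonoid.closure (Set.range n) with hSm
  -- step 1: find Q with Q ∈ Sm and Q + 1 ∈ Sm
  obtain ⟨Q, hQ, hQ1⟩ : ∃ Q : ℕ, Q ∈ Sm ∧ Q + 1 ∈ Sm := by
    set G := AddSubgroup.closure (Set.range fun i => (n i : ℤ)) with hG
    obtain ⟨a, ha⟩ := Int.subgroup_cyclic G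
    have hdvd : ∀ i, a ∣ (n i : ℤ) := by
      intro i
      have : (n i : ℤ) ∈ G := AddSubgroup.subset_closure ⟨i, rfl⟩
      rw [ha, AddSubgroup.mem_closure_singleton] at this
      obtain ⟨c, hc⟩ := this
      exact ⟨c, by rw [← hc, smul_eq_mul]; ring⟩
    have hone : (1 : ℤ) ∈ G := by
      have habs : a.natAbs = 1 := by
        have : a.natAbs ∣ Finset.univ.gcd n := by
          refine Finset.dvd_gcd fun i _ => ?_
          have := Int.natAbs_dvd_natAbs.mpr (hdvd i)
          simpa using this
        rw [hgcd] at this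
        exact Nat.dvd_one.mp this
      rw [ha, AddSubgroup.mem_closure_singleton]
      rcases Int.natAbs_eq_iff.mp habs with h | h
      · exact ⟨1, by simp [h]⟩
      · exact ⟨-1, by simp [h]⟩
    have key : ∀ x ∈ G, ∃ P Q : ℕ, P ∈ Sm ∧ Q ∈ Sm ∧ (P : ℤ) - Q = x := by
      intro x hx
      induction hx using AddSubgroup.closure_induction with
      | mem y hy =>
        obtain ⟨i, rfl⟩ := hy
        exact ⟨n i, 0, AddSubmonoid.subset_closure ⟨i, rfl⟩, zero_mem _, by simp⟩
      | zero => exact ⟨0, 0, zero_mem _, zero_mem _, by simp⟩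
      | add y z _ _ hy hz =>
        obtain ⟨P1, Q1, hP1, hQ1, h1⟩ := hy
        obtain ⟨P2, Q2, hP2, hQ2, h2⟩ := hz
        exact ⟨P1 + P2, Q1 + Q2, add_mem hP1 hP2, add_mem hQ1 hQ2, by push_cast; omega⟩
      | neg y _ hy =>
        obtain ⟨P1, Q1, hP1, hQ1, h1⟩ := hy
        exact ⟨Q1, P1, hQ1, hP1, by omega⟩
    obtain ⟨P, Q, hP, hQ, hPQ⟩ := key 1 hone
    have : P = Q + 1 := by omega
    exact ⟨Q, hQ, this ▸ hP⟩
  rcases Nat.eq_zero_or_pos Q with hQ0 | hQpos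
  · subst hQ0
    refine ⟨0, fun m _ => ?_⟩
    have h1 : (1 : ℕ) ∈ Sm := by simpa using hQ1
    have := nsmul_mem h1 m
    simpa using this
  · refine ⟨Q * Q, fun m hm => ?_⟩
    set a := m / Q with ha
    set r := m % Q with hr
    have hrQ : r < Q := Nat.mod_lt _ hQpos
    have hmeq : Q * a + r = m := Nat.div_add_mod m Q
    have haQ : Q ≤ a := (Nat.le_div_iff_mul_le hQpos).mpr (by nlinarith)
    have hra : r ≤ a := by omega
    have keyeq : (a - r) * Q + r * (Q + 1) = m := by
      have hmz : (Q : ℤ) * a + r = m := by exact_mod_cast hmeq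
      zify [hra]
      linear_combination hmz
    have h1 : (a - r) * Q ∈ Sm := by
      simpa [nsmul_eq_mul] using nsmul_mem hQ (a - r)
    have h2 : r * (Q + 1) ∈ Sm := by
      simpa [nsmul_eq_mul] using nsmul_mem hQ1 r
    exact keyeq ▸ add_mem h1 h2

/-- with `T = ⟨2n₁,…,2n_k, f−2g₁,…,f−2g_t⟩` as in the half
construction, `S` is the half of `T`: for every `x ∈ ℕ`, `x ∈ S ↔ 2x ∈ T`. -/
theorem stmt2 (k : ℕ) (hk : 0 < k) (n : Fin k → ℕ) (hn : ∀ i, 0 < n i)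
    (hgcd : Finset.univ.gcd n = 1)
    (S : AddSubmonoid ℕ) (hS : S = AddSubmonoid.closure (Set.range n))
    (t : ℕ) (g : Fin t → ℤ) (hg : pseudoFrobeniusSet S = Set.range g)
    (f : ℤ) (hodd : Odd f) (hf : 3 * frobeniusNumber S + 1 ≤ f)
    (T : AddSubmonoid ℕ)
    (hT : T = AddSubmonoid.closure
      (Set.range (fun i => 2 * n i) ∪ Set.range (fun j => (f - 2 * g j).toNat))) :
    ∀ x : ℕ, x ∈ S ↔ 2 * x ∈ T := by
  obtain ⟨N, hN⟩ := exists_bound k n hgcd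
  rw [← hS] at hN
  set C : Set ℤ := {x : ℤ | ¬ S.zmem x} with hC
  have hF : frobeniusNumber S = sSup C := rfl
  set F := frobeniusNumber S with hFdef
  have hbdd : BddAbove C := by
    refine ⟨(N : ℤ), fun y hy => ?_⟩
    by_contra h
    push_neg at h
    exact hy ⟨y.toNat, hN _ (by omega), by omega⟩
  have hne : C.Nonempty := ⟨-1, fun ⟨m, _, hm⟩ => by omega⟩
  have hmem_of_gt : ∀ y : ℤ, F < y → S.zmem y := by
    intro y hy
    by_contra h
    have : y ≤ F := hF ▸ le_csSup hbdd h
    omega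
  have hneg1 : (-1 : ℤ) ≤ F := by
    have : (-1 : ℤ) ∈ C := fun ⟨m, _, hm⟩ => by omega
    exact hF ▸ le_csSup hbdd this
  have hgj : ∀ j, g j ≤ F := by
    intro j
    have hj : g j ∈ pseudoFrobeniusSet S := hg ▸ ⟨j, rfl⟩
    exact hF ▸ le_csSup hbdd hj.1
  intro x
  constructor
  · -- forward
    intro hx
    rw [hS] at hx
    rw [hT]
    induction hx using AddSubmonoid.closure_induction with
    | mem y hy =>
      obtain ⟨i, rfl⟩ := hy
      exact AddSubmonoid.subset_closure (Or.inl ⟨i, rfl⟩)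
    | zero => simpa using zero_mem _
    | add y z _ _ hy hz =>
      rw [mul_add]
      exact add_mem hy hz
  · -- backward
    intro hx
    rw [hT] at hx
    have key : ∀ c ∈ AddSubmonoid.closure
        (Set.range (fun i => 2 * n i) ∪ Set.range (fun j => (f - 2 * g j).toNat)),
        ∃ (a m : ℕ) (z : ℤ), (c : ℤ) = 2 * a + z ∧ a ∈ S ∧
        (m = 0 → z = 0) ∧ (m : ℤ) * (F + 1) ≤ z ∧ (2 : ℤ) ∣ (z - m) := by
      intro c hc
      induction hc using AddSubmonoid.closure_induction with
      | mem y hy =>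
        rcases hy with ⟨i, rfl⟩ | ⟨j, hj⟩
        · exact ⟨n i, 0, 0, by push_cast; ring,
            hS ▸ AddSubmonoid.subset_closure ⟨i, rfl⟩, fun _ => rfl, by simp, by simp⟩
        · have hge : F + 1 ≤ f - 2 * g j := by have := hgj j; omega
          have hnn : (0 : ℤ) ≤ f - 2 * g j := by omega
          obtain ⟨c, hc⟩ := hodd
          refine ⟨0, 1, f - 2 * g j, ?_, zero_mem _, by simp, by simpa using hge,
            ⟨c - g j, by omega⟩⟩
          rw [← hj]
          push_cast [Int.toNat_of_nonneg hnn]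
          ring
      | zero => exact ⟨0, 0, 0, by simp, zero_mem _, fun _ => rfl, by simp, by simp⟩
      | add y z hy' hz' hy hz =>
        obtain ⟨a1, m1, z1, he1, ha1, hm1, hb1, hp1⟩ := hy
        obtain ⟨a2, m2, z2, he2, ha2, hm2, hb2, hp2⟩ := hz
        refine ⟨a1 + a2, m1 + m2, z1 + z2, by push_cast at he1 he2 ⊢; omega,
          add_mem ha1 ha2, ?_, ?_, ?_⟩
        · intro h
          have h1 := hm1 (by omega)
          have h2 := hm2 (by omega)
          omega
        · push_cast [add_mul]
          nlinarith [hb1, hb2]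
        · obtain ⟨c1, hc1⟩ := hp1
          obtain ⟨c2, hc2⟩ := hp2
          exact ⟨c1 + c2, by push_cast; omega⟩
    obtain ⟨a, m, z, heq, haS, hm0, hbound, hpar⟩ := key _ hx
    push_cast at heq
    rcases Nat.eq_zero_or_pos m with hm | hm
    · have hz0 := hm0 hm
      have : x = a := by omega
      exact this ▸ haS
    · have h2m : (2 : ℤ) ≤ (m : ℕ) := by
        obtain ⟨c, hc⟩ := hpar
        omega
      have hz : 2 * (F + 1) ≤ z := le_trans
        (mul_le_mul_of_nonneg_right h2m (by omega)) hbound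
      have hFx : F < (x : ℤ) := by omega
      obtain ⟨p, hpS, hpx⟩ := hmem_of_gt x hFx
      have : p = x := by omega
      exact this ▸ hpS
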